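/- Let Q satisfy (Q2), (Q3) and define R₀ = -M²/(C_α D_M) > 0. If (f_n) ⊂ F_M is a minimizing sequence for D (i.e. D(f_n) → D_M), then for every R > R₀, lim_{n→∞} ∫_{|x|≥R}∫ f_n dv dx = 0. -/

import Mathlib

open MeasureTheory Real Filter Topology
noncomputable section

abbrev Space := EuclideanSpace ℝ (Fin 3)
abbrev Phase := Space × Space

/-- spatial mass density induced by a phase-space density `f`. -/
def rhoF (f : Phase → ℝ) (x : Space) : ℝ := ∫ v : Space, f (x, v)

/-- Newtonian potential `U_f = -(1/|·|) * ρ_f` induced by `f`. -/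
def Upot (f : Phase → ℝ) (x : Space) : ℝ := -∫ y : Space, rhoF f y / ‖x - y‖

/-- field energy `∫ |∇U_f|² dx`. -/
def fieldEnergy (f : Phase → ℝ) : ℝ := ∫ x : Space, ‖gradient (Upot f) x‖ ^ 2

/-- modulus of angular momentum squared `L = |x × v|² = |x|²|v|² - (x·v)²`. -/
def Lang (x v : Space) : ℝ := ‖x‖ ^ 2 * ‖v‖ ^ 2 - (inner ℝ x v : ℝ) ^ 2

/-- Casimir functional `∫∫ Q(f,L) dv dx`. -/
def Casimir (Q : ℝ → ℝ → ℝ) (f : Phase → ℝ) : ℝ :=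
  ∫ p : Phase, Q (f p) (Lang p.1 p.2)

/-- kinetic energy `(1/2)∫∫ |v|² f dv dx`. -/
def kinetic (f : Phase → ℝ) : ℝ := (1/2) * ∫ p : Phase, ‖p.2‖ ^ 2 * f p

/-- `J(f) = ∫∫ Q(f,L) + (1/2)∫∫ |v|² f`. -/
def Jfun (Q : ℝ → ℝ → ℝ) (f : Phase → ℝ) : ℝ := Casimir Q f + kinetic f

/-- energy-Casimir functional `D(f) = J(f) - (1/8π)∫|∇U_f|²`. -/
def Dfun (Q : ℝ → ℝ → ℝ) (f : Phase → ℝ) : ℝ :=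
  Jfun Q f - (1 / (8 * π)) * fieldEnergy f

/-- spherical symmetry: `f(Ax, Av) = f(x,v)` for all `A ∈ SO(3)`. -/
def SphSymm (f : Phase → ℝ) : Prop :=
  ∀ A : Space ≃ₗᵢ[ℝ] Space, LinearMap.det A.toLinearEquiv.toLinearMap = 1 →
    ∀ x v : Space, f (A x, A v) = f (x, v)

/-- the constraint set `F_M`: nonnegative, spherically symmetric `f ∈ L¹(ℝ⁶)`
with total mass `M` and `J(f) < ∞` (i.e. both terms of `J` are integrable). -/
def memFM (Q : ℝ → ℝ → ℝ) (M : ℝ) (f : Phase → ℝ) : Prop :=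
  Integrable f ∧ (∀ p, 0 ≤ f p) ∧ (∫ p : Phase, f p) = M ∧
  Integrable (fun p : Phase => Q (f p) (Lang p.1 p.2)) ∧
  Integrable (fun p : Phase => ‖p.2‖ ^ 2 * f p) ∧ SphSymm f

/-- `D_M = inf { D(f) : f ∈ F_M }`. -/
def DM (Q : ℝ → ℝ → ℝ) (M : ℝ) : ℝ := sInf (Dfun Q '' {f | memFM Q M f})

/-- assumption (Q1). -/
def AQ1 (Q : ℝ → ℝ → ℝ) (C₁ F₀ μ₁ : ℝ) : Prop :=
  ∀ f L : ℝ, F₀ ≤ f → 0 ≤ L → C₁ * f ^ (1 + 1/μ₁) ≤ Q f L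

/-- assumption (Q2). -/
def AQ2 (Q : ℝ → ℝ → ℝ) (C₂ F₀ μ₂ : ℝ) : Prop :=
  ∀ f L : ℝ, 0 ≤ f → f ≤ F₀ → 0 ≤ L → Q f L ≤ C₂ * f ^ (1 + 1/μ₂)

/-- assumption (Q3), first part. -/
def AQ3 (Q : ℝ → ℝ → ℝ) (μ₃ : ℝ) : Prop :=
  ∀ f L lam : ℝ, 0 ≤ f → 0 ≤ L → 0 ≤ lam → lam ≤ 1 →
    lam ^ (1 + 1/μ₃) * Q f L ≤ Q (lam * f) L

/-- assumption (Q3), second part: `Q(f, ·)` decreasing. -/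
def AQ3dec (Q : ℝ → ℝ → ℝ) : Prop :=
  ∀ f L₁ L₂ : ℝ, 0 ≤ f → 0 ≤ L₁ → L₁ ≤ L₂ → Q f L₂ ≤ Q f L₁

/-- assumption (Q4): strict convexity in `f` and `∂_f Q(0,L) = 0`. -/
def AQ4 (Q : ℝ → ℝ → ℝ) : Prop :=
  (∀ L : ℝ, 0 ≤ L → StrictConvexOn ℝ (Set.Ici 0) fun y => Q y L) ∧
  (∀ L : ℝ, 0 ≤ L → deriv (fun y => Q y L) 0 = 0)

/-- mass of `f` inside the ball of radius `R`. -/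
def massIn (f : Phase → ℝ) (R : ℝ) : ℝ :=
  ∫ p in {p : Phase | ‖p.1‖ ≤ R}, f p


section Aux

lemma slab_null (r : ℝ) : volume {p : Phase | ‖p.1‖ = r} = 0 := by
  have hset : {p : Phase | ‖p.1‖ = r} = (Metric.sphere (0:Space) r) ×ˢ (Set.univ : Set Space) := by
    ext p
    simp [Metric.mem_sphere, dist_zero_right]
  rw [hset, MeasureTheory.Measure.volume_eq_prod, MeasureTheory.Measure.prod_prod,
    MeasureTheory.Measure.addHaar_sphere volume, zero_mul]

lemma ball_meas (r : ℝ) : MeasurableSet {p : Phase | ‖p.1‖ ≤ r} :=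
  (isClosed_le (continuous_fst.norm) continuous_const).measurableSet

lemma massIn_nonneg {f : Phase → ℝ} (hf : ∀ p, 0 ≤ f p) (r : ℝ) : 0 ≤ massIn f r :=
  setIntegral_nonneg (ball_meas r) (fun p _ => hf p)

lemma massIn_le {f : Phase → ℝ} (hfi : Integrable f) (hf : ∀ p, 0 ≤ f p) (r : ℝ) :
    massIn f r ≤ ∫ p, f p :=
  setIntegral_le_integral hfi (Filter.Eventually.of_forall hf)

lemma massIn_continuous {f : Phase → ℝ} (hfi : Integrable f) : Continuous (massIn f) := by
  rw [continuous_iff_continuousAt]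
  intro r
  have key : Tendsto (fun r' : ℝ => ∫ p, ({p : Phase | ‖p.1‖ ≤ r'}).indicator f p)
      (nhds r) (nhds (∫ p, ({p : Phase | ‖p.1‖ ≤ r}).indicator f p)) := by
    apply tendsto_integral_filter_of_dominated_convergence (fun p => ‖f p‖)
    · exact Filter.Eventually.of_forall fun r' =>
        (hfi.aestronglyMeasurable).indicator (ball_meas r')
    · exact Filter.Eventually.of_forall fun r' =>
        Filter.Eventually.of_forall fun p => norm_indicator_le_norm_self f p
    · exact hfi.norm
    · have hne : ∀ᵐ p : Phase, ‖p.1‖ ≠ r := by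
        rw [MeasureTheory.ae_iff]
        simpa using slab_null r
      filter_upwards [hne] with p hp
      rcases lt_or_gt_of_ne hp with h | h
      · have hev : ∀ᶠ r' in nhds r, ({p_1 : Phase | ‖p_1.1‖ ≤ r'}).indicator f p = f p := by
          filter_upwards [Ioi_mem_nhds h] with r' hr'
          have hm : p ∈ {p_1 : Phase | ‖p_1.1‖ ≤ r'} := le_of_lt (show ‖p.1‖ < r' from hr')
          exact Set.indicator_of_mem hm f
        have hm0 : p ∈ {p_1 : Phase | ‖p_1.1‖ ≤ r} := le_of_lt h
        have : ({p_1 : Phase | ‖p_1.1‖ ≤ r}).indicator f p = f p :=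
          Set.indicator_of_mem hm0 f
        rw [this]
        exact Tendsto.congr' (Filter.EventuallyEq.symm hev) tendsto_const_nhds
      · have hev : ∀ᶠ r' in nhds r, ({p_1 : Phase | ‖p_1.1‖ ≤ r'}).indicator f p = 0 := by
          filter_upwards [Iio_mem_nhds h] with r' hr'
          have hm : p ∉ {p_1 : Phase | ‖p_1.1‖ ≤ r'} := by
            simp only [Set.mem_setOf_eq, not_le]
            exact hr'
          exact Set.indicator_of_notMem hm f
        have hm0 : p ∉ {p_1 : Phase | ‖p_1.1‖ ≤ r} := by
          simp only [Set.mem_setOf_eq, not_le]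
          exact h
        have : ({p_1 : Phase | ‖p_1.1‖ ≤ r}).indicator f p = 0 :=
          Set.indicator_of_notMem hm0 f
        rw [this]
        exact Tendsto.congr' (Filter.EventuallyEq.symm hev) tendsto_const_nhds
  have heq : ∀ r' : ℝ, massIn f r' = ∫ p, ({p : Phase | ‖p.1‖ ≤ r'}).indicator f p := by
    intro r'
    rw [massIn, ← integral_indicator (ball_meas r')]
  unfold ContinuousAt
  simpa only [← heq] using key

lemma massIn_tendsto {f : Phase → ℝ} (hfi : Integrable f) {R : ℝ} (hR : 0 ≤ R) :
    Tendsto (fun k : ℕ => massIn f (R + k)) atTop (nhds (∫ p, f p)) := by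
  have hmono : Monotone (fun k : ℕ => {p : Phase | ‖p.1‖ ≤ R + k}) := by
    intro i j hij p hp
    simp only [Set.mem_setOf_eq] at hp ⊢
    have hc : (i : ℝ) ≤ (j : ℝ) := Nat.cast_le.mpr hij
    linarith
  have hunion : (⋃ k : ℕ, {p : Phase | ‖p.1‖ ≤ R + k}) = Set.univ := by
    ext p
    simp only [Set.mem_iUnion, Set.mem_univ, iff_true]
    obtain ⟨k, hk⟩ := exists_nat_ge ‖p.1‖
    exact ⟨k, by simp only [Set.mem_setOf_eq]; linarith⟩
  have := tendsto_setIntegral_of_monotone (f := f) (μ := volume)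
    (fun k : ℕ => ball_meas (R + k)) hmono (by rw [hunion]; exact hfi.integrableOn)
  rw [hunion] at this
  simpa [massIn, setIntegral_univ] using this

lemma outer_eq {f : Phase → ℝ} (hfi : Integrable f) (R : ℝ) :
    ∫ p in {p : Phase | R ≤ ‖p.1‖}, f p = (∫ p, f p) - massIn f R := by
  have h1 : ({p : Phase | R ≤ ‖p.1‖} : Set Phase) =ᵐ[volume] (({p : Phase | ‖p.1‖ ≤ R})ᶜ : Set Phase) := by
    have hsub : {p : Phase | R ≤ ‖p.1‖} \ ({p : Phase | ‖p.1‖ ≤ R})ᶜ ⊆ {p : Phase | ‖p.1‖ = R} := by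
      intro p hp
      simp only [Set.mem_diff, Set.mem_setOf_eq, Set.mem_compl_iff, not_not] at hp
      exact le_antisymm hp.2 hp.1
    have hsub2 : ({p : Phase | ‖p.1‖ ≤ R})ᶜ \ {p : Phase | R ≤ ‖p.1‖} ⊆ (∅ : Set Phase) := by
      intro p hp
      simp only [Set.mem_diff, Set.mem_compl_iff, Set.mem_setOf_eq, not_le] at hp
      exact absurd hp.2 (asymm hp.1)
    rw [MeasureTheory.ae_eq_set]
    refine ⟨measure_mono_null hsub (slab_null R), measure_mono_null hsub2 (by simp)⟩
  rw [MeasureTheory.setIntegral_congr_set h1]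
  have := integral_add_compl (ball_meas R) hfi
  have hmeq : massIn f R = ∫ p in {p : Phase | ‖p.1‖ ≤ R}, f p := rfl
  linarith

end Aux

/-- concentration: under (Q2), (Q3), with `R₀ = -M²/(C_α D_M) > 0`,
along any minimizing sequence of `D` in `F_M` the mass outside any ball of
radius `R > R₀` tends to `0`. -/
theorem mass_concentration (Q : ℝ → ℝ → ℝ) (C₂ F₀ μ₂ μ₃ α Cα M : ℝ)
    (hC₂ : 0 < C₂) (hF₀ : 0 < F₀) (hμ₂ : 0 < μ₂) (hμ₂' : μ₂ < 3/2)
    (hμ₃ : 0 < μ₃) (hμ₃' : μ₃ < 3/2) (hM : 0 < M)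
    (hQpos : ∀ f L : ℝ, 0 ≤ f → 0 ≤ L → 0 ≤ Q f L)
    (hQ2 : AQ2 Q C₂ F₀ μ₂) (hQ3 : AQ3 Q μ₃)
    (hα : 0 < α) (hCα : 0 < Cα) (hDMneg : DM Q M < 0)
    -- the splitting estimate of the previous lemma:
    (hsplit : ∀ f : Phase → ℝ, memFM Q M f → ∀ R : ℝ, 0 < R →
      (-(Cα * DM Q M) / M ^ 2 - 1 / R) * (massIn f R * (M - massIn f R)) ≤
        Dfun Q f - DM Q M)
    (fseq : ℕ → Phase → ℝ) (hmem : ∀ n, memFM Q M (fseq n))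
    (hmin : Tendsto (fun n => Dfun Q (fseq n)) atTop (nhds (DM Q M))) :
    ∀ R : ℝ, -(M ^ 2) / (Cα * DM Q M) < R →
      Tendsto (fun n => ∫ p in {p : Phase | R ≤ ‖p.1‖}, fseq n p) atTop (nhds 0) := by
  intro R hR
  have hL : DM Q M < 0 := hDMneg
  have hCαL : Cα * DM Q M < 0 := mul_neg_of_pos_of_neg hCα hL
  have hR0pos : 0 < -(M ^ 2) / (Cα * DM Q M) :=
    div_pos_of_neg_of_neg (by nlinarith) hCαL
  have hRpos : 0 < R := lt_trans hR0pos hR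
  have hkeyRL : R * (Cα * DM Q M) < -(M ^ 2) := by
    have h := hR
    rw [div_lt_iff_of_neg hCαL] at h
    linarith
  obtain ⟨c, hcdef⟩ : ∃ c : ℝ, c = -(Cα * DM Q M) / M ^ 2 - 1 / R := ⟨_, rfl⟩
  have hc : 0 < c := by
    rw [hcdef, sub_pos, div_lt_div_iff₀ hRpos (pow_pos hM 2)]
    nlinarith
  -- lower bound on D along the sequence
  have hbdd : BddBelow (Dfun Q '' {f | memFM Q M f}) := by
    by_contra hb
    have h0 : DM Q M = 0 := by
      rw [DM]
      exact Real.sInf_of_not_bddBelow hb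
    rw [h0] at hDMneg
    exact lt_irrefl (0 : ℝ) hDMneg
  have hDge : ∀ n, DM Q M ≤ Dfun Q (fseq n) := fun n =>
    csInf_le hbdd ⟨fseq n, hmem n, rfl⟩
  -- rewrite the outer integral
  have hfun : ∀ n, (∫ p in {p : Phase | R ≤ ‖p.1‖}, fseq n p) = M - massIn (fseq n) R := by
    intro n
    rw [outer_eq (hmem n).1 R, (hmem n).2.2.1]
  -- the key estimate for all radii ≥ R
  have key : ∀ n, ∀ r : ℝ, R ≤ r →
      c * (massIn (fseq n) r * (M - massIn (fseq n) r)) ≤ Dfun Q (fseq n) - DM Q M := by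
    intro n r hr
    have hrpos : 0 < r := lt_of_lt_of_le hRpos hr
    have hs := hsplit (fseq n) (hmem n) r hrpos
    have hcc : c ≤ -(Cα * DM Q M) / M ^ 2 - 1 / r := by
      have h1 : 1 / r ≤ 1 / R := one_div_le_one_div_of_le hRpos hr
      rw [hcdef]
      linarith
    have hgnn : 0 ≤ massIn (fseq n) r := massIn_nonneg (hmem n).2.1 r
    have hgle : massIn (fseq n) r ≤ M := by
      have := massIn_le (hmem n).1 (hmem n).2.1 r
      rw [(hmem n).2.2.1] at this
      exact this
    have hprod : 0 ≤ massIn (fseq n) r * (M - massIn (fseq n) r) :=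
      mul_nonneg hgnn (by linarith)
    calc c * (massIn (fseq n) r * (M - massIn (fseq n) r))
        ≤ (-(Cα * DM Q M) / M ^ 2 - 1 / r) * (massIn (fseq n) r * (M - massIn (fseq n) r)) :=
          mul_le_mul_of_nonneg_right hcc hprod
      _ ≤ Dfun Q (fseq n) - DM Q M := hs
  -- main convergence of the inner mass
  have htend : Tendsto (fun n => massIn (fseq n) R) atTop (nhds M) := by
    rw [Metric.tendsto_atTop]
    intro ε hε
    obtain ⟨ε', hε'def⟩ : ∃ e : ℝ, e = min (ε / 2) (M / 2) := ⟨_, rfl⟩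
    have hε' : 0 < ε' := by rw [hε'def]; exact lt_min (by linarith) (by linarith)
    have hε'M : ε' ≤ M / 2 := by rw [hε'def]; exact min_le_right _ _
    have hε'ε : ε' < ε := by
      rw [hε'def]
      exact lt_of_le_of_lt (min_le_left _ _) (by linarith)
    have hδ : 0 < c * (ε' * (M - ε')) := mul_pos hc (mul_pos hε' (by linarith))
    have hev : ∀ᶠ n in atTop, Dfun Q (fseq n) - DM Q M < c * (ε' * (M - ε')) := by
      have h2 : Tendsto (fun n => Dfun Q (fseq n) - DM Q M) atTop (nhds 0) := by
        have := hmin.sub_const (DM Q M)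
        simpa using this
      exact h2.eventually_lt_const hδ
    obtain ⟨N, hN⟩ := Filter.eventually_atTop.mp hev
    refine ⟨N, fun n hn => ?_⟩
    have hN' := hN n hn
    have hgnn : 0 ≤ massIn (fseq n) R := massIn_nonneg (hmem n).2.1 R
    have hgle : massIn (fseq n) R ≤ M := by
      have := massIn_le (hmem n).1 (hmem n).2.1 R
      rw [(hmem n).2.2.1] at this
      exact this
    have hlow : M - ε < massIn (fseq n) R := by
      by_contra hcon
      push_neg at hcon
      have hcon' : massIn (fseq n) R < M - ε' := by linarith
      obtain ⟨r, hrR, h1, h2⟩ : ∃ r, R ≤ r ∧ ε' ≤ massIn (fseq n) r ∧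
          massIn (fseq n) r ≤ M - ε' := by
        by_cases hc0 : ε' ≤ massIn (fseq n) R
        · exact ⟨R, le_refl R, hc0, by linarith⟩
        · push_neg at hc0
          have hten := massIn_tendsto (hmem n).1 (le_of_lt hRpos)
          rw [(hmem n).2.2.1] at hten
          obtain ⟨k, hk⟩ := (hten.eventually_const_lt (show M - ε' < M by linarith)).exists
          have hRk : R ≤ R + (k : ℝ) := le_add_of_nonneg_right (Nat.cast_nonneg k)
          have hIVT := intermediate_value_Icc hRk
            ((massIn_continuous (hmem n).1).continuousOn (s := Set.Icc R (R + (k : ℝ))))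
          have hmem' : ε' ∈ Set.Icc (massIn (fseq n) R) (massIn (fseq n) (R + (k : ℝ))) :=
            ⟨le_of_lt hc0, by linarith⟩
          obtain ⟨r, hrIcc, hr_eq⟩ := hIVT hmem'
          exact ⟨r, hrIcc.1, le_of_eq hr_eq.symm, by rw [hr_eq]; linarith⟩
      have hk2 := key n r hrR
      have hmono : ε' * (M - ε') ≤ massIn (fseq n) r * (M - massIn (fseq n) r) := by
        nlinarith
      nlinarith [mul_le_mul_of_nonneg_left hmono hc.le]
    rw [Real.dist_eq, abs_lt]
    constructor <;> linarith
  have hfin : Tendsto (fun n => M - massIn (fseq n) R) atTop (nhds 0) := by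
    have := (tendsto_const_nhds (x := M) (f := atTop (α := ℕ))).sub htend
    simpa using this
  exact hfin.congr (fun n => (hfun n).symm)
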